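/- Bernstein-type bound for nonnegative-mean independent random variables. Let Z_1,…,Z_T be independent real-valued random variables on a probability space, and let B > 0, L > 0 be constants such that |Z_i − E[Z_i]| ≤ B almost surely and Var[Z_i] ≤ L·E[Z_i] for every i ∈ [T]. Then for every δ ∈ (0,1), with probability at least 1 − δ: |(1/T)·Σ_{i=1}^T (Z_i − E[Z_i])| ≤ (1/(2T))·Σ_{i=1}^T E[Z_i] + (2L + 4B/3)·log(2/δ)/T. -/

import Mathlib

open MeasureTheory ProbabilityTheory

section BernsteinAux

open Real Finset

lemma bn_aux1 (y : ℝ) : 0 ≤ 1 + (y - 1) * Real.exp y := by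
  nlinarith [mul_le_mul_of_nonneg_right (Real.add_one_le_exp (-y)) (Real.exp_pos y).le,
    Real.exp_neg y, Real.exp_pos y, mul_inv_cancel₀ (ne_of_gt (Real.exp_pos y))]

lemma bn_aux2 {y : ℝ} (hy : 0 ≤ y) : 0 ≤ 2 + y + (y - 2) * Real.exp y := by
  have hD : ∀ x : ℝ, HasDerivAt (fun z => 2 + z + (z - 2) * Real.exp z)
      (1 + (x - 1) * Real.exp x) x := by
    intro x
    have h1 : HasDerivAt (fun z : ℝ => (z - 2) * Real.exp z)
        (1 * Real.exp x + (x - 2) * Real.exp x) x :=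
      ((hasDerivAt_id x).sub_const 2).mul (Real.hasDerivAt_exp x)
    have h2 := ((hasDerivAt_const x (2:ℝ)).add (hasDerivAt_id x)).add h1
    exact h2.congr_deriv (by ring)
  have hmono : Monotone (fun z => 2 + z + (z - 2) * Real.exp z) :=
    monotone_of_hasDerivAt_nonneg hD (fun x => bn_aux1 x)
  have := hmono hy
  simpa using this

lemma bn_aux3 {y : ℝ} (hy : 0 ≤ y) : (3 - y) * Real.exp y ≤ 3 + 2*y + y^2/2 := by
  have hD : ∀ x : ℝ, HasDerivAt (fun z => 3 + 2*z + z^2/2 - (3 - z) * Real.exp z)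
      (2 + x + (x - 2) * Real.exp x) x := by
    intro x
    have h1 : HasDerivAt (fun z : ℝ => (3 - z) * Real.exp z)
        ((0 - 1) * Real.exp x + (3 - x) * Real.exp x) x :=
      ((hasDerivAt_const x (3:ℝ)).sub (hasDerivAt_id x)).mul (Real.hasDerivAt_exp x)
    have h2 : HasDerivAt (fun z : ℝ => 3 + 2*z + z^2/2)
        (2 + x) x := by
      have := ((hasDerivAt_const x (3:ℝ)).add ((hasDerivAt_id x).const_mul 2)).add
        (((hasDerivAt_pow 2 x)).div_const 2)
      exact this.congr_deriv (by norm_num)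
    have h := h2.sub h1
    rw [show (2 + x) - ((0 - 1) * Real.exp x + (3 - x) * Real.exp x)
        = 2 + x + (x - 2) * Real.exp x by ring] at h
    exact h
  have hmono : MonotoneOn (fun z => 3 + 2*z + z^2/2 - (3 - z) * Real.exp z) (Set.Ici 0) := by
    apply monotoneOn_of_hasDerivWithinAt_nonneg (convex_Ici 0)
      (Continuous.continuousOn (by continuity))
      (f' := fun x => 2 + x + (x - 2) * Real.exp x)
    · intro x hx
      exact (hD x).hasDerivWithinAt
    · intro x hx
      rw [interior_Ici] at hx
      exact bn_aux2 (le_of_lt hx)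
  have h0 := hmono (Set.self_mem_Ici) (Set.mem_Ici.2 hy) hy
  simp only [Real.exp_zero] at h0
  nlinarith [h0]

lemma bn_aux4 {y : ℝ} (hy : y ≤ 0) : Real.exp y ≤ 1 + y + y^2/2 := by
  have hD : ∀ x : ℝ, HasDerivAt (fun z => Real.exp z - 1 - z - z^2/2)
      (Real.exp x - 1 - x) x := by
    intro x
    have := (((Real.hasDerivAt_exp x).sub_const 1).sub (hasDerivAt_id x)).sub
      ((hasDerivAt_pow 2 x).div_const 2)
    exact this.congr_deriv (by norm_num)
  have hmono : Monotone (fun z => Real.exp z - 1 - z - z^2/2) :=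
    monotone_of_hasDerivAt_nonneg hD (fun x => by
      have := Real.add_one_le_exp x; simp; linarith)
  have := hmono hy
  simp only [Real.exp_zero] at this
  nlinarith [this]

lemma bn_exp_quad {u y : ℝ} (hu0 : 0 ≤ u) (hu3 : u < 3) (hy : y ≤ u) :
    Real.exp y ≤ 1 + y + 3/(2*(3-u)) * y^2 := by
  have h3u : (0:ℝ) < 3 - u := by linarith
  have hden : (0:ℝ) < 2*(3-u) := by linarith
  rcases le_or_gt y 0 with hy0 | hy0
  · have h := bn_aux4 hy0
    have : y^2/2 ≤ 3/(2*(3-u)) * y^2 := by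
      rw [div_mul_eq_mul_div, div_le_div_iff₀ two_pos hden]
      nlinarith [sq_nonneg y]
    linarith
  · have key := bn_aux3 hy0.le
    have h3y : (0:ℝ) < 3 - y := by linarith
    have h1 : (3-y) * (Real.exp y - 1 - y) ≤ 3*y^2/2 := by nlinarith
    have h2 : 0 ≤ Real.exp y - 1 - y := by
      have := Real.add_one_le_exp y; linarith
    rw [div_mul_eq_mul_div, ← sub_le_iff_le_add', le_div_iff₀ hden]
    nlinarith [mul_nonneg h2 (by linarith : (0:ℝ) ≤ u - y)]

lemma bn_int_exp {Ω : Type*} [MeasurableSpace Ω] {μ : Measure Ω} [IsProbabilityMeasure μ]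
    {X : Ω → ℝ} (hm : Measurable X) {B s : ℝ} (hs : 0 ≤ s)
    (hb : ∀ᵐ ω ∂μ, |X ω| ≤ B) :
    Integrable (fun ω => Real.exp (s * X ω)) μ := by
  refine Integrable.mono' (integrable_const (Real.exp (s * B)))
    ((hm.const_mul s).exp.aestronglyMeasurable) ?_
  filter_upwards [hb] with ω h
  rw [Real.norm_eq_abs, Real.abs_exp]
  exact Real.exp_le_exp.2 (mul_le_mul_of_nonneg_left ((abs_le.1 h).2) hs)

lemma bn_mgf_bound {Ω : Type*} [MeasurableSpace Ω] {μ : Measure Ω} [IsProbabilityMeasure μ]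
    {X : Ω → ℝ} (hm : Measurable X) (h2 : MemLp X 2 μ) (hmean : ∫ ω, X ω ∂μ = 0)
    {B s K : ℝ} (hB : 0 < B) (hb : ∀ᵐ ω ∂μ, |X ω| ≤ B)
    (hs : 0 ≤ s) (hsB : s * B < 3) (hK : 3/(2*(3 - s*B)) ≤ K) :
    mgf X μ s ≤ Real.exp (s^2 * (∫ ω, (X ω)^2 ∂μ) * K) := by
  have hint1 : Integrable X μ := h2.integrable one_le_two
  have hint2 : Integrable (fun ω => (X ω)^2) μ := by
    have := h2.integrable_sq
    simpa [pow_two] using this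
  have hintexp : Integrable (fun ω => Real.exp (s * X ω)) μ := bn_int_exp hm hs hb
  have h3sb : (0:ℝ) < 3 - s*B := by linarith
  have hK0 : 0 < K := lt_of_lt_of_le (by positivity) hK
  have hpt : ∀ᵐ ω ∂μ, Real.exp (s * X ω) ≤ 1 + s * X ω + s^2 * K * (X ω)^2 := by
    filter_upwards [hb] with ω h
    have hy : s * X ω ≤ s * B := mul_le_mul_of_nonneg_left ((abs_le.1 h).2) hs
    have := bn_exp_quad (mul_nonneg hs hB.le) hsB hy
    have h1 : 3/(2*(3 - s*B)) * (s * X ω)^2 ≤ K * (s * X ω)^2 :=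
      mul_le_mul_of_nonneg_right hK (sq_nonneg _)
    calc Real.exp (s * X ω) ≤ 1 + s * X ω + 3/(2*(3 - s*B)) * (s * X ω)^2 := this
    _ ≤ 1 + s * X ω + K * (s * X ω)^2 := by linarith
    _ = 1 + s * X ω + s^2 * K * (X ω)^2 := by ring
  have hrhs : Integrable (fun ω => 1 + s * X ω + s^2 * K * (X ω)^2) μ :=
    ((integrable_const 1).add (hint1.const_mul s)).add (hint2.const_mul (s^2*K))
  have h1 : mgf X μ s ≤ ∫ ω, (1 + s * X ω + s^2 * K * (X ω)^2) ∂μ :=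
    integral_mono_ae hintexp hrhs hpt
  have h2' : ∫ ω, (1 + s * X ω + s^2 * K * (X ω)^2) ∂μ
      = 1 + s^2 * K * ∫ ω, (X ω)^2 ∂μ := by
    have ha : Integrable (fun ω => 1 + s * X ω) μ := (integrable_const 1).add (hint1.const_mul s)
    have hb2 : Integrable (fun ω => s^2 * K * (X ω)^2) μ := hint2.const_mul (s^2*K)
    rw [integral_add ha hb2, integral_add (integrable_const 1) (hint1.const_mul s),
      integral_const, integral_const_mul, integral_const_mul, hmean]
    simp
  rw [h2'] at h1
  calc mgf X μ s ≤ 1 + s^2 * K * ∫ ω, (X ω)^2 ∂μ := h1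
  _ ≤ Real.exp (s^2 * K * ∫ ω, (X ω)^2 ∂μ) := by
      have := Real.add_one_le_exp (s^2 * K * ∫ ω, (X ω)^2 ∂μ); linarith
  _ = Real.exp (s^2 * (∫ ω, (X ω)^2 ∂μ) * K) := by ring_nf

lemma bn_one_sided {Ω : Type*} [MeasurableSpace Ω] (μ : Measure Ω) [IsProbabilityMeasure μ]
    {T : ℕ} (X : Fin T → Ω → ℝ) (hmeas : ∀ i, Measurable (X i))
    (hindep : iIndepFun X μ)
    {B : ℝ} (hB : 0 < B) (hb : ∀ i, ∀ᵐ ω ∂μ, |X i ω| ≤ B)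
    (h2 : ∀ i, MemLp (X i) 2 μ) (hmean : ∀ i, ∫ ω, X i ω ∂μ = 0)
    {t : ℝ} (ht : 0 < t) :
    (μ {ω | t ≤ ∑ i, X i ω}).toReal ≤
      Real.exp (-(t^2 / (2 * (∑ i, ∫ ω, (X i ω)^2 ∂μ) + B*t))) := by
  set V : ℝ := ∑ i, ∫ ω, (X i ω)^2 ∂μ with hVdef
  have hV0 : 0 ≤ V := Finset.sum_nonneg fun i _ => integral_nonneg fun ω => sq_nonneg _
  have hWpos : 0 < V + B*t/2 := by positivity
  set W : ℝ := V + B*t/2 with hWdef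
  set s : ℝ := t / W with hsdef
  have hs : 0 < s := div_pos ht hWpos
  have hWs : W * s = t := by rw [hsdef]; field_simp
  have hsB : s * B < 3 := by
    rw [hsdef, div_mul_eq_mul_div, div_lt_iff₀ hWpos, hWdef]
    nlinarith [mul_pos ht hB]
  have h6pos : 0 < 6*V + B*t := by positivity
  set K : ℝ := 3 * W / (6*V + B*t) with hKdef
  have hK : 3/(2*(3 - s*B)) ≤ K := by
    have h3sb : (0:ℝ) < 3 - s*B := by linarith
    rw [hKdef, div_le_div_iff₀ (by positivity) h6pos]
    have hws : W * (s * B) = t * B := by rw [← mul_assoc, hWs]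
    have hexp : 3*W*(2*(3 - s*B)) = 3*(6*V+B*t) := by
      rw [show 3*W*(2*(3 - s*B)) = 18*W - 6*(W*(s*B)) from by ring, hws, hWdef]; ring
    linarith [hexp]
  have hintexp : ∀ i, Integrable (fun ω => Real.exp (s * X i ω)) μ :=
    fun i => bn_int_exp (hmeas i) hs.le (hb i)
  have hchern := measure_ge_le_exp_mul_mgf (X := ∑ i, X i) (μ := μ) t hs.le
    (hindep.integrable_exp_mul_sum hmeas (fun i _ => hintexp i))
  rw [iIndepFun.mgf_sum hindep hmeas] at hchern
  have hprod : ∏ i, mgf (X i) μ s ≤ Real.exp (s^2 * V * K) := by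
    calc ∏ i, mgf (X i) μ s
        ≤ ∏ i, Real.exp (s^2 * (∫ ω, (X i ω)^2 ∂μ) * K) := by
          apply Finset.prod_le_prod (fun i _ => mgf_nonneg)
          exact fun i _ => bn_mgf_bound (hmeas i) (h2 i) (hmean i) hB (hb i) hs.le hsB hK
      _ = Real.exp (∑ i, s^2 * (∫ ω, (X i ω)^2 ∂μ) * K) := (Real.exp_sum _ _).symm
      _ = Real.exp (s^2 * V * K) := by
          rw [hVdef]
          congr 1
          rw [Finset.mul_sum, Finset.sum_mul]
  have hset : {ω | t ≤ ∑ i, X i ω} = {ω | t ≤ (∑ i, X i) ω} := by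
    ext ω; simp [Finset.sum_apply]
  rw [hset]
  calc (μ {ω | t ≤ (∑ i, X i) ω}).toReal
      ≤ Real.exp (-s * t) * ∏ i, mgf (X i) μ s := hchern
    _ ≤ Real.exp (-s * t) * Real.exp (s^2 * V * K) := by
        exact mul_le_mul_of_nonneg_left hprod (Real.exp_pos _).le
    _ = Real.exp (-s * t + s^2 * V * K) := (Real.exp_add _ _).symm
    _ ≤ Real.exp (-(t^2 / (2 * V + B*t))) := by
        apply Real.exp_le_exp.2
        have h2pos : 0 < 2*V + B*t := by positivity
        have e1 : s * t - s^2 * V * K = t^2 * (3*V + B*t) / (W * (6*V + B*t)) := by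
          rw [hKdef, hsdef]
          field_simp
          ring
        have e2 : t^2 / (2*V + B*t) ≤ t^2 * (3*V + B*t) / (W * (6*V + B*t)) := by
          rw [div_le_div_iff₀ h2pos (by positivity), hWdef]
          nlinarith [mul_nonneg (mul_nonneg (sq_nonneg t) hV0) (mul_pos ht hB).le,
            mul_nonneg (sq_nonneg t) (sq_nonneg (B*t))]
        rw [← e1] at e2
        linarith

lemma bn_arith {B L M V l : ℝ} (hB : 0 < B) (hL : 0 < L) (hM : 0 ≤ M) (hl : 0 < l)
    (hV : V ≤ L * M) :
    l * (2*V + B*(M/2 + (2*L+4*B/3)*l)) ≤ (M/2 + (2*L+4*B/3)*l)^2 := by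
  nlinarith [mul_le_mul_of_nonneg_left hV (by positivity : (0:ℝ) ≤ 2*l),
    mul_nonneg (mul_nonneg hM hl.le) hB.le,
    mul_nonneg (mul_nonneg hl.le hl.le) (mul_pos hL hB).le,
    mul_nonneg (mul_nonneg hl.le hl.le) (mul_pos hL hL).le,
    mul_nonneg (mul_nonneg hl.le hl.le) (mul_pos hB hB).le,
    sq_nonneg M]

end BernsteinAux

/-- Bernstein-type bound for independent random variables whose variance is controlled by
their mean: if `|Z_i − E[Z_i]| ≤ B` a.s. and `Var[Z_i] ≤ L·E[Z_i]`, then with probability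
at least `1 − δ`,
`|(1/T) Σ_i (Z_i − E[Z_i])| ≤ (1/(2T)) Σ_i E[Z_i] + (2L + 4B/3)·log(2/δ)/T`. -/
theorem bernstein_nonneg_mean
    {Ω : Type*} [MeasurableSpace Ω] (μ : Measure Ω) [IsProbabilityMeasure μ]
    (T : ℕ) (hT : 1 ≤ T) (Z : Fin T → Ω → ℝ)
    (hmeas : ∀ i, Measurable (Z i))
    (hint : ∀ i, Integrable (Z i) μ)
    (hindep : iIndepFun Z μ)
    (B L : ℝ) (hB : 0 < B) (hL : 0 < L)
    (hbound : ∀ i, ∀ᵐ ω ∂μ, |Z i ω - ∫ ω', Z i ω' ∂μ| ≤ B)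
    (hvar : ∀ i, variance (Z i) μ ≤ L * ∫ ω', Z i ω' ∂μ)
    (δ : ℝ) (hδ0 : 0 < δ) (hδ1 : δ < 1) :
    ENNReal.ofReal (1 - δ) ≤
      μ {ω | |(1 / (T : ℝ)) * ∑ i, (Z i ω - ∫ ω', Z i ω' ∂μ)| ≤
        (1 / (2 * (T : ℝ))) * ∑ i, (∫ ω', Z i ω' ∂μ) +
          (2 * L + 4 * B / 3) * Real.log (2 / δ) / (T : ℝ)} := by
  classical
  have hT0 : (0:ℝ) < (T:ℝ) := by exact_mod_cast Nat.lt_of_lt_of_le Nat.zero_lt_one hT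
  set m : Fin T → ℝ := fun i => ∫ ω', Z i ω' ∂μ with hmdef
  set X : Fin T → Ω → ℝ := fun i ω => Z i ω - m i with hXdef
  have hXmeas : ∀ i, Measurable (X i) := fun i => (hmeas i).sub measurable_const
  have hXb : ∀ i, ∀ᵐ ω ∂μ, |X i ω| ≤ B := hbound
  have hXmean : ∀ i, ∫ ω, X i ω ∂μ = 0 := by
    intro i
    rw [show X i = fun ω => Z i ω - m i from rfl]
    rw [integral_sub (hint i) (integrable_const _), integral_const]
    simp [hmdef]
  have hX2 : ∀ i, MemLp (X i) 2 μ := fun i =>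
    MemLp.of_bound (hXmeas i).aestronglyMeasurable B
      ((hXb i).mono fun ω h => by rwa [Real.norm_eq_abs])
  have hXindep : iIndepFun X μ :=
    hindep.comp (fun i x => x - m i) (fun i => measurable_id.sub measurable_const)
  have hσvar : ∀ i, ∫ ω, (X i ω)^2 ∂μ = variance (Z i) μ := by
    intro i
    have h1 : variance (X i) μ = ∫ ω, (X i ω)^2 ∂μ := by
      have := variance_of_integral_eq_zero (hXmeas i).aemeasurable (hXmean i)
      simpa [pow_two] using this
    have h2 : evariance (X i) μ = evariance (Z i) μ := by
      unfold evariance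
      congr 1
      funext ω
      rw [hXmean i]
      simp [hXdef, hmdef]
    rw [← h1]
    unfold variance
    rw [h2]
  set ℓ : ℝ := Real.log (2/δ) with hldef
  have hℓ : 0 < ℓ := Real.log_pos (by rw [lt_div_iff₀ hδ0]; linarith)
  set c : ℝ := 2*L + 4*B/3 with hcdef
  have hc : 0 < c := by positivity
  set M : ℝ := ∑ i, m i with hMdef
  have hm0 : ∀ i, 0 ≤ m i := by
    intro i
    have h := (variance_nonneg (Z i) μ).trans (hvar i)
    have := div_nonneg h hL.le
    rwa [mul_div_cancel_left₀ _ hL.ne'] at this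
  have hM0 : 0 ≤ M := Finset.sum_nonneg fun i _ => hm0 i
  set V : ℝ := ∑ i, ∫ ω, (X i ω)^2 ∂μ with hVdef
  have hVL : V ≤ L * M := by
    rw [hVdef, hMdef, Finset.mul_sum]
    exact Finset.sum_le_sum fun i _ => (hσvar i) ▸ (hvar i)
  set t : ℝ := M/2 + c*ℓ with htdef
  have ht : 0 < t := by positivity
  -- two one-sided bounds
  have h1 := bn_one_sided μ X hXmeas hXindep hB hXb hX2 hXmean ht
  have hnegindep : iIndepFun (fun i => -X i) μ :=
    hXindep.comp (fun i x => -x) (fun i => measurable_neg)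
  have h2 := bn_one_sided μ (fun i => -X i) (fun i => (hXmeas i).neg) hnegindep hB
    (fun i => (hXb i).mono fun ω h => by simpa using h)
    (fun i => (hX2 i).neg)
    (fun i => by simp [integral_neg, hXmean i]) ht
  have hnegsq : ∀ i, ∫ ω, ((fun i => -X i) i ω)^2 ∂μ = ∫ ω, (X i ω)^2 ∂μ := by
    intro i; simp
  simp only [hnegsq] at h2
  set E : ℝ := t^2 / (2 * V + B*t) with hEdef
  -- exponent bound
  have hEℓ : ℓ ≤ E := by
    rw [hEdef, le_div_iff₀ (by positivity)]
    have := bn_arith hB hL hM0 hℓ hVL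
    calc ℓ * (2*V + B*t) = ℓ * (2*V + B*(M/2 + c*ℓ)) := by rw [htdef]
      _ ≤ (M/2 + c*ℓ)^2 := by rw [hcdef] at *; exact this
      _ = t^2 := by rw [htdef]
  have hexpδ : Real.exp (-E) ≤ δ/2 := by
    have hlog : Real.log (δ/2) = -ℓ := by
      rw [hldef, Real.log_div hδ0.ne' two_ne_zero, Real.log_div two_ne_zero hδ0.ne']
      ring
    calc Real.exp (-E) ≤ Real.exp (-ℓ) := Real.exp_le_exp.2 (by linarith)
      _ = δ/2 := by rw [← hlog, Real.exp_log (by positivity)]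
  -- the event
  set A : Set Ω := {ω | |∑ i, X i ω| ≤ t} with hAdef
  have hSmeas : Measurable (fun ω => ∑ i, X i ω) :=
    Finset.measurable_sum _ (fun i _ => hXmeas i)
  have hAmeas : MeasurableSet A := measurableSet_le hSmeas.abs measurable_const
  have hsub : Aᶜ ⊆ {ω | t ≤ ∑ i, X i ω} ∪ {ω | t ≤ ∑ i, -X i ω} := by
    intro ω hω
    simp only [hAdef, Set.mem_compl_iff, Set.mem_setOf_eq, not_le] at hω
    simp only [Set.mem_union, Set.mem_setOf_eq]
    rcases le_total 0 (∑ i, X i ω) with h0 | h0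
    · left; rw [abs_of_nonneg h0] at hω; linarith
    · right
      rw [abs_of_nonpos h0] at hω
      rw [Finset.sum_neg_distrib]
      linarith
  have hcompl : μ Aᶜ ≤ ENNReal.ofReal δ := by
    calc μ Aᶜ ≤ μ ({ω | t ≤ ∑ i, X i ω} ∪ {ω | t ≤ ∑ i, -X i ω}) := measure_mono hsub
      _ ≤ μ {ω | t ≤ ∑ i, X i ω} + μ {ω | t ≤ ∑ i, -X i ω} := measure_union_le _ _
      _ ≤ ENNReal.ofReal (Real.exp (-E)) + ENNReal.ofReal (Real.exp (-E)) := by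
          gcongr
          · rw [← ENNReal.ofReal_toReal (measure_ne_top μ _)]
            exact ENNReal.ofReal_le_ofReal h1
          · rw [← ENNReal.ofReal_toReal (measure_ne_top μ _)]
            exact ENNReal.ofReal_le_ofReal h2
      _ = ENNReal.ofReal (Real.exp (-E) + Real.exp (-E)) :=
          (ENNReal.ofReal_add (Real.exp_pos _).le (Real.exp_pos _).le).symm
      _ ≤ ENNReal.ofReal δ := ENNReal.ofReal_le_ofReal (by linarith)
  -- identify the target set with A
  have hset : {ω | |(1 / (T : ℝ)) * ∑ i, (Z i ω - m i)| ≤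
      (1 / (2 * (T : ℝ))) * M + c * ℓ / (T : ℝ)} = A := by
    ext ω
    simp only [hAdef, Set.mem_setOf_eq]
    have hXeq : ∑ i, (Z i ω - m i) = ∑ i, X i ω := rfl
    rw [hXeq]
    have hrhs : (1 / (2 * (T : ℝ))) * M + c * ℓ / (T : ℝ) = t / (T:ℝ) := by
      rw [htdef]; field_simp
    rw [hrhs, one_div, inv_mul_eq_div, abs_div, abs_of_pos hT0, div_le_div_iff_of_pos_right hT0]
  rw [hset]
  have hApq := prob_compl_eq_one_sub (μ := μ) hAmeas
  calc ENNReal.ofReal (1 - δ) = 1 - ENNReal.ofReal δ := by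
        rw [ENNReal.ofReal_sub _ hδ0.le, ENNReal.ofReal_one]
    _ ≤ 1 - μ Aᶜ := tsub_le_tsub_left hcompl 1
    _ = μ A := by rw [hApq, ENNReal.sub_sub_cancel ENNReal.one_ne_top prob_le_one]
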